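/- Residual of the projected solution in FGMRES with singular Hessenberg: if A Z_j = Q_{j+1} H̄_j, H(j+1,j) = 0, and H_j := H(1:j,1:j) is singular, then beta e_1 need not lie in the range of H_j, and in that case the minimum of ||b - A(x_0 + Z_j y)||_2 over y is strictly positive, i.e., FGMRES cannot produce the exact solution from the current space. -/
import Mathlib


open Matrix

noncomputable def vnorm {n : ℕ} (v : Fin n → ℝ) : ℝ := Real.sqrt (∑ i, (v i) ^ 2)

/-- FGMRES with singular Hessenberg matrix: if `A Z_j = Q_{j+1} H̄_j`, `H(j+1,j) = 0`,
`H_j = H(1:j,1:j)` is singular, and `β e_1` does not lie in the column span of `H̄_j`,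
then `‖b - A(x_0 + Z_j y)‖₂ = ‖β e_1 - H̄_j y‖₂ > 0` for all `y`: FGMRES cannot produce
the exact solution from the current space. -/
theorem fgmres_singular_hessenberg_positive_residual
    {n m : ℕ} (hm : 0 < m)
    (A : Matrix (Fin n) (Fin n) ℝ)
    (b x0 : Fin n → ℝ)
    (r0 : Fin n → ℝ) (hr0 : r0 = b - A.mulVec x0)
    (β : ℝ) (hβ : β = vnorm r0) (hβpos : 0 < β)
    (q : Fin (m + 1) → Fin n → ℝ)
    (hq0 : q 0 = β⁻¹ • r0)
    (horth : ∀ i k : Fin (m + 1), (∑ t, q i t * q k t) = if i = k then 1 else 0)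
    (z : Fin m → Fin n → ℝ)
    (H : Matrix (Fin (m + 1)) (Fin m) ℝ)
    (hHess : ∀ (i : Fin (m + 1)) (k : Fin m), (k : ℕ) + 1 < (i : ℕ) → H i k = 0)
    (hrel : ∀ k : Fin m, A.mulVec (z k) = ∑ i, H i k • q i)
    (hzero : H (Fin.last m) ⟨m - 1, by omega⟩ = 0)
    (hsing : (Matrix.of fun i k : Fin m => H (Fin.castSucc i) k).det = 0)
    (hnot : ∀ y : Fin m → ℝ,
      H.mulVec y ≠ fun i => if i = (0 : Fin (m + 1)) then β else 0) :
    ∀ y : Fin m → ℝ,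
      vnorm (b - A.mulVec (x0 + ∑ k, y k • z k)) =
        vnorm ((fun i => if i = (0 : Fin (m + 1)) then β else 0) - H.mulVec y) ∧
      0 < vnorm ((fun i => if i = (0 : Fin (m + 1)) then β else 0) - H.mulVec y) := by
  intro y
  set c : Fin (m + 1) → ℝ :=
    (fun i => if i = (0 : Fin (m + 1)) then β else 0) - H.mulVec y with hc
  have hr0q : r0 = β • q 0 := by
    rw [hq0, smul_smul, mul_inv_cancel₀ (ne_of_gt hβpos), one_smul]
  -- residual as combination of q's
  have hres : b - A.mulVec (x0 + ∑ k, y k • z k) = ∑ i, c i • q i := by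
    have h1 : A.mulVec (x0 + ∑ k, y k • z k)
        = A.mulVec x0 + ∑ k, y k • A.mulVec (z k) := by
      rw [A.mulVec_add]
      congr 1
      rw [show A.mulVec (∑ k, y k • z k) = ∑ k, A.mulVec (y k • z k) from
        map_sum (Matrix.mulVecLin A) _ _]
      exact Finset.sum_congr rfl fun k _ => A.mulVec_smul _ _
    rw [h1]
    have h2 : b - (A.mulVec x0 + ∑ k, y k • A.mulVec (z k))
        = r0 - ∑ k, y k • A.mulVec (z k) := by rw [hr0]; abel
    rw [h2]
    have h3 : (∑ k, y k • A.mulVec (z k)) = ∑ i, (H.mulVec y) i • q i := by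
      funext t
      simp only [hrel, Finset.sum_apply, Pi.smul_apply, smul_eq_mul,
        Matrix.mulVec, dotProduct, Finset.mul_sum, Finset.sum_mul]
      rw [Finset.sum_comm]
      exact Finset.sum_congr rfl fun i _ => Finset.sum_congr rfl fun k _ => by ring
    rw [h3, hr0q]
    have h4 : β • q 0 = ∑ i, (if i = (0 : Fin (m + 1)) then β else 0) • q i := by
      rw [Finset.sum_eq_single (0 : Fin (m + 1))]
      · simp
      · intro i _ hi; simp [hi]
      · simp
    rw [h4, ← Finset.sum_sub_distrib]
    refine Finset.sum_congr rfl fun i _ => ?_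
    rw [hc]
    simp [sub_smul, Pi.sub_apply]
  rw [hres]
  -- norm of combination
  have hnorm : (∑ t, (∑ i, c i • q i) t ^ 2) = ∑ i, (c i) ^ 2 := by
    have : ∀ t, ((∑ i, c i • q i) t) ^ 2
        = ∑ i, ∑ k, (c i * c k) * (q i t * q k t) := by
      intro t
      simp only [Finset.sum_apply, Pi.smul_apply, smul_eq_mul, sq,
        Finset.sum_mul_sum]
      exact Finset.sum_congr rfl fun i _ => Finset.sum_congr rfl fun k _ => by ring
    simp only [this]
    rw [Finset.sum_comm]
    refine Finset.sum_congr rfl fun i _ => ?_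
    rw [Finset.sum_comm]
    have : ∀ k : Fin (m+1), (∑ t, (c i * c k) * (q i t * q k t))
        = (c i * c k) * if i = k then 1 else 0 := by
      intro k
      rw [← Finset.mul_sum, horth]
    simp only [this]
    rw [Finset.sum_eq_single i]
    · simp [sq]
    · intro k _ hk; simp [Ne.symm hk]
    · simp
  have hnv : vnorm (∑ i, c i • q i) = vnorm c := by
    simp only [vnorm]
    rw [hnorm]
  constructor
  · exact hnv
  · -- positivity
    have hcne : c ≠ 0 := by
      intro h
      apply hnot y
      have := sub_eq_zero.mp h
      exact this.symm
    obtain ⟨i, hi⟩ := Function.ne_iff.mp hcne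
    have hpos : 0 < ∑ i, (c i) ^ 2 := by
      apply Finset.sum_pos' (fun i _ => sq_nonneg _)
      exact ⟨i, Finset.mem_univ i, pow_two_pos_of_ne_zero hi⟩
    simpa [vnorm] using Real.sqrt_pos.mpr hpos
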